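/- Let m ≥ k ≥ 1 be integers and let m_1,…,m_k be positive integers with m_1 + ⋯ + m_k = m. Then the number of ordered k-tuples (V_1,…,V_k) of pairwise disjoint nonempty subsets of {1,…,m} with ⋃_{i=1}^k V_i = {1,…,m} and |V_i| = m_i for each i, such that the partition {V_1,…,V_k} is non-crossing, equals m!/(m−k+1)!. In particular this count does not depend on the cardinalities m_1,…,m_k. -/

import Mathlib

/-- An (ordered or unordered) family of blocks is non-crossing if there are no indices
`i₁ < i₂ < i₃ < i₄` with `i₁, i₃` in one block and `i₂, i₄` in a different block. -/
def IsNonCrossingFamily {m k : ℕ} (V : Fin k → Finset (Fin m)) : Prop :=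
  ¬ ∃ (a b : Fin k) (i₁ i₂ i₃ i₄ : Fin m),
      a ≠ b ∧ i₁ < i₂ ∧ i₂ < i₃ ∧ i₃ < i₄ ∧
      i₁ ∈ V a ∧ i₃ ∈ V a ∧ i₂ ∈ V b ∧ i₄ ∈ V b

set_option linter.unusedSectionVars false
set_option linter.unusedVariables false
set_option maxHeartbeats 1000000

namespace NCP
open Finset
variable {k m : ℕ}

def hgt (msize : Fin k → ℕ) (q : Fin k → ℕ) (t : ℕ) : ℤ :=
  (∑ i ∈ Finset.univ.filter (fun i => q i < t), (msize i : ℤ)) - t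

/-- Feasibility of a placement: at every non-minimum position the height is positive. -/
def Feas (msize : Fin k → ℕ) (m : ℕ) (q : Fin k → ℕ) : Prop :=
  ∀ x, x < m → (∀ i, q i ≠ x) → 1 ≤ hgt msize q x

lemma hgt_zero (msize q : Fin k → ℕ) : hgt msize q 0 = 0 := by simp [hgt]

lemma hgt_succ_of_ne (msize : Fin k → ℕ) {q : Fin k → ℕ} {t : ℕ} (h : ∀ i, q i ≠ t) :
    hgt msize q (t + 1) = hgt msize q t - 1 := by
  have he : Finset.univ.filter (fun i => q i < t + 1) = Finset.univ.filter (fun i => q i < t) := by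
    ext i
    simp only [mem_filter, mem_univ, true_and]
    have := h i
    omega
  simp only [hgt, he]
  push_cast
  ring

lemma hgt_succ_of_eq (msize : Fin k → ℕ) {q : Fin k → ℕ} (hinj : Function.Injective q)
    {i : Fin k} {t : ℕ} (h : q i = t) :
    hgt msize q (t + 1) = hgt msize q t + msize i - 1 := by
  have he : Finset.univ.filter (fun j => q j < t + 1)
      = insert i (Finset.univ.filter (fun j => q j < t)) := by
    ext j
    simp only [mem_filter, mem_univ, true_and, mem_insert]
    constructor
    · intro hj
      rcases Nat.lt_succ_iff_lt_or_eq.1 hj with h1 | h1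
      · exact Or.inr h1
      · exact Or.inl (hinj (h1.trans h.symm))
    · rintro (rfl | hj)
      · omega
    
      · omega
  rw [hgt, hgt, he, Finset.sum_insert (by simp [h])]
  push_cast
  ring

lemma hgt_final (msize : Fin k → ℕ) {q : Fin k → ℕ} {m : ℕ} (hq : ∀ i, q i < m)
    (hsum : ∑ i, msize i = m) : hgt msize q m = 0 := by
  have he : Finset.univ.filter (fun i => q i < m) = Finset.univ := by
    ext i; simp [hq i]
  rw [hgt, he]
  push_cast [← hsum]
  simp

lemma hgt_nonneg (msize : Fin k → ℕ) {q : Fin k → ℕ} {m : ℕ}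
    (hinj : Function.Injective q) (hpos : ∀ i, 0 < msize i)
    (hfeas : Feas msize m q) : ∀ t, t ≤ m → 0 ≤ hgt msize q t := by
  intro t
  induction t with
  | zero => intro _; simp [hgt_zero]
  | succ t ih =>
    intro ht
    have ht' : t ≤ m := by omega
    have h0 := ih ht'
    by_cases hmin : ∃ i, q i = t
    · obtain ⟨i, hi⟩ := hmin
      rw [hgt_succ_of_eq msize hinj hi]
      have := hpos i
      omega
    · push_neg at hmin
      have := hfeas t (by omega) hmin
      rw [hgt_succ_of_ne msize hmin]
      omega


noncomputable def qm (msize : Fin k → ℕ) (q : Fin k → ℕ) (x : ℕ) : ℕ :=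
  sSup {q' | q' < x ∧ hgt msize q q' < hgt msize q x}

section qmLemmas

variable {msize q : Fin k → ℕ} {x : ℕ}
  (hx1 : 1 ≤ hgt msize q x) (hxpos : 0 < x)

include hx1 hxpos

lemma qm_mem : qm msize q x < x ∧ hgt msize q (qm msize q x) < hgt msize q x := by
  have hne : ({q' | q' < x ∧ hgt msize q q' < hgt msize q x} : Set ℕ).Nonempty :=
    ⟨0, hxpos, by rw [hgt_zero]; omega⟩
  have hbdd : BddAbove {q' | q' < x ∧ hgt msize q q' < hgt msize q x} :=
    ⟨x, fun y hy => le_of_lt hy.1⟩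
  exact Nat.sSup_mem hne hbdd

omit hx1 hxpos in
lemma qm_max {j : ℕ} (hj : j < x) (hj2 : hgt msize q j < hgt msize q x) :
    j ≤ qm msize q x :=
  le_csSup ⟨x, fun y hy => le_of_lt hy.1⟩ ⟨hj, hj2⟩

lemma qm_mid {j : ℕ} (hj1 : qm msize q x < j) (hj2 : j < x) :
    hgt msize q x ≤ hgt msize q j := by
  by_contra hc
  push_neg at hc
  exact absurd (qm_max hj2 hc) (by omega)

/-- characterization of `qm`. -/
lemma qm_eq {q₀ : ℕ} (h1 : q₀ < x) (h2 : hgt msize q q₀ < hgt msize q x)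
    (h3 : ∀ j, q₀ < j → j < x → hgt msize q x ≤ hgt msize q j) :
    qm msize q x = q₀ := by
  have hle := qm_max h1 h2
  rcases lt_or_eq_of_le hle with hlt | heq
  · exact absurd (h3 _ hlt (qm_mem hx1 hxpos).1) (by simpa using not_le.2 (qm_mem hx1 hxpos).2)
  · exact heq.symm

end qmLemmas

/-- If `x` is a non-minimum position with `1 ≤ hgt x`, then `qm x` is a minimum position. -/
lemma qm_is_min {msize q : Fin k → ℕ} {x : ℕ}
    (hx1 : 1 ≤ hgt msize q x) (hxpos : 0 < x) :
    ∃ i, q i = qm msize q x := by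
  by_contra hc
  push_neg at hc
  have hstep := hgt_succ_of_ne msize hc
  have hmem := qm_mem hx1 hxpos
  rcases Nat.lt_or_ge (qm msize q x + 1) x with h | h
  · have := qm_mid hx1 hxpos (Nat.lt_add_one _) h
    omega
  · have : qm msize q x + 1 = x := by omega
    rw [this] at hstep
    omega


lemma pos_of_one_le_hgt {msize q : Fin k → ℕ} {x : ℕ} (h : 1 ≤ hgt msize q x) : 0 < x := by
  rcases Nat.eq_zero_or_pos x with rfl | h'
  · rw [hgt_zero] at h; omega
  · exact h'

/-- the blocks built from a feasible placement -/
noncomputable def Vmk (msize : Fin k → ℕ) (p : Fin k → Fin m) (i : Fin k) : Finset (Fin m) :=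
  Finset.univ.filter (fun x => x = p i ∨
    ((∀ j, p j ≠ x) ∧ qm msize (fun j => (p j : ℕ)) (x : ℕ) = (p i : ℕ)))

section VmkLemmas

variable {msize : Fin k → ℕ} {p : Fin k → Fin m}
  (hpos : ∀ i, 0 < msize i) (hsum : ∑ i, msize i = m)
  (hinj : Function.Injective p)
  (hfeas : Feas msize m (fun i => (p i : ℕ)))

lemma mem_Vmk {x : Fin m} {i : Fin k} : x ∈ Vmk msize p i ↔ (x = p i ∨
    ((∀ j, p j ≠ x) ∧ qm msize (fun j => (p j : ℕ)) (x : ℕ) = (p i : ℕ))) := by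
  simp [Vmk]

omit hinj hfeas in
lemma hinjq (hinj : Function.Injective p) :
    Function.Injective (fun i => ((p i : ℕ))) := fun a b h => hinj (Fin.val_injective h)

include hfeas in
lemma nonmin_hgt {x : Fin m} (hxnm : ∀ j, p j ≠ x) :
    1 ≤ hgt msize (fun i => (p i : ℕ)) (x : ℕ) :=
  hfeas x x.isLt (fun i hv => hxnm i (Fin.val_injective hv))

include hfeas in
lemma Vmk_le {x : Fin m} {i : Fin k} (hx : x ∈ Vmk msize p i) : (p i : ℕ) ≤ (x : ℕ) := by
  rw [mem_Vmk] at hx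
  rcases hx with rfl | ⟨hnm, hq⟩
  · exact le_refl _
  · have h1 := nonmin_hgt hfeas hnm
    have := (qm_mem h1 (pos_of_one_le_hgt h1)).1
    omega

lemma self_mem_Vmk (i : Fin k) : p i ∈ Vmk msize p i := by
  rw [mem_Vmk]; exact Or.inl rfl

include hfeas in
lemma min'_Vmk (i : Fin k) :
    (Vmk msize p i).min' ⟨p i, self_mem_Vmk i⟩ = p i := by
  apply le_antisymm
  · exact Finset.min'_le _ _ (self_mem_Vmk i)
  · apply Finset.le_min'
    intro y hy
    exact Vmk_le hfeas hy

include hinj in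
lemma Vmk_disjoint {i j : Fin k} (hij : i ≠ j) : Disjoint (Vmk msize p i) (Vmk msize p j) := by
  rw [Finset.disjoint_left]
  intro x hxi hxj
  rw [mem_Vmk] at hxi hxj
  apply hij
  rcases hxi with rfl | ⟨hnm, hq⟩
  · rcases hxj with h | ⟨hnm', hq'⟩
    · exact hinj h
    · exact absurd rfl (hnm' i)
  · rcases hxj with rfl | ⟨hnm', hq'⟩
    · exact absurd rfl (hnm j)
    · exact hinj (Fin.val_injective (hq ▸ hq'))

include hfeas in
lemma Vmk_cover (x : Fin m) : ∃ i, x ∈ Vmk msize p i := by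
  by_cases hx : ∃ i, p i = x
  · obtain ⟨i, rfl⟩ := hx
    exact ⟨i, self_mem_Vmk i⟩
  · push_neg at hx
    have h1 := nonmin_hgt hfeas hx
    obtain ⟨i, hi⟩ := qm_is_min h1 (pos_of_one_le_hgt h1)
    exact ⟨i, by rw [mem_Vmk]; exact Or.inr ⟨hx, hi.symm⟩⟩

include hpos hsum hinj hfeas in
lemma exists_close (i : Fin k) {L : ℤ}
    (h1 : hgt msize (fun j => (p j : ℕ)) (p i) < L)
    (h2 : L ≤ hgt msize (fun j => (p j : ℕ)) ((p i : ℕ) + 1)) :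
    ∃ x : Fin m, (∀ j, p j ≠ x) ∧ qm msize (fun j => (p j : ℕ)) (x : ℕ) = (p i : ℕ) ∧
      hgt msize (fun j => (p j : ℕ)) (x : ℕ) = L := by
  classical
  have hqm : ∀ j, (fun j => (p j : ℕ)) j < m := fun j => (p j).isLt
  have hqinj : Function.Injective (fun j => (p j : ℕ)) := hinjq hinj
  have hnn := hgt_nonneg msize hqinj hpos hfeas
  have hL1 : 1 ≤ L := by
    have := hnn (p i) (le_of_lt (p i).isLt)
    omega
  have hfin : hgt msize (fun j => (p j : ℕ)) m = 0 := hgt_final msize hqm hsum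
  have hpim : (p i : ℕ) + 1 < m := by
    rcases Nat.lt_or_ge ((p i : ℕ) + 1) m with h | h
    · exact h
    · exfalso
      have hpe : (p i : ℕ) + 1 = m := by have := (p i).isLt; omega
      rw [hpe, hfin] at h2
      omega
  have hEx : ∃ t, (p i : ℕ) < t ∧ hgt msize (fun j => (p j : ℕ)) (t + 1) < L :=
    ⟨m - 1, by omega, by rw [(by omega : m - 1 + 1 = m), hfin]; omega⟩
  obtain ⟨x₀, ⟨hP1, hP2⟩, hmin⟩ : ∃ x₀, ((p i : ℕ) < x₀ ∧
      hgt msize (fun j => (p j : ℕ)) (x₀ + 1) < L) ∧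
      ∀ t, t < x₀ → ¬((p i : ℕ) < t ∧ hgt msize (fun j => (p j : ℕ)) (t + 1) < L) :=
    ⟨Nat.find hEx, Nat.find_spec hEx, fun t ht => Nat.find_min hEx ht⟩
  have hx0m : x₀ < m := by
    by_contra hc
    push_neg at hc
    exact hmin (m - 1) (by omega)
      ⟨by omega, by rw [(by omega : m - 1 + 1 = m), hfin]; omega⟩
  have key : ∀ j, (p i : ℕ) < j → j ≤ x₀ → L ≤ hgt msize (fun j => (p j : ℕ)) j := by
    intro j hj1 hj2
    rcases eq_or_lt_of_le (show (p i : ℕ) + 1 ≤ j by omega) with h | h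
    · rw [← h]; exact h2
    · have h5 := hmin (j - 1) (by omega)
      have h6 : ¬ hgt msize (fun j => (p j : ℕ)) ((j - 1) + 1) < L :=
        fun hb => h5 ⟨by omega, hb⟩
      rw [(by omega : j - 1 + 1 = j)] at h6
      omega
  have hnm : ∀ j, (p j : ℕ) ≠ x₀ := by
    intro j hj
    have hstep := hgt_succ_of_eq msize hqinj (i := j) (t := x₀) hj
    have h7 := key x₀ hP1 le_rfl
    have := hpos j
    omega
  have hstep := hgt_succ_of_ne msize hnm
  have hx0L : hgt msize (fun j => (p j : ℕ)) x₀ = L := by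
    have := key x₀ hP1 le_rfl
    omega
  have hx1 : 1 ≤ hgt msize (fun j => (p j : ℕ)) x₀ := by omega
  refine ⟨⟨x₀, hx0m⟩, fun j hj => hnm j (by simpa using congrArg Fin.val hj), ?_, hx0L⟩
  apply qm_eq hx1 (pos_of_one_le_hgt hx1) (show (p i : ℕ) < x₀ from hP1) (by omega)
  intro j hj1 hj2
  rw [hx0L]
  exact key j hj1 (le_of_lt hj2)

include hfeas in
lemma close_unique {x x' : Fin m} (hnm : ∀ j, p j ≠ x) (hnm' : ∀ j, p j ≠ x')
    (hqq : qm msize (fun j => (p j : ℕ)) (x : ℕ) = qm msize (fun j => (p j : ℕ)) (x' : ℕ))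
    (hL : hgt msize (fun j => (p j : ℕ)) (x : ℕ) = hgt msize (fun j => (p j : ℕ)) (x' : ℕ))
    (hlt : (x : ℕ) < (x' : ℕ)) : False := by
  have h1 := nonmin_hgt hfeas hnm
  have h1' := nonmin_hgt hfeas hnm'
  have hstep : hgt msize (fun j => (p j : ℕ)) ((x : ℕ) + 1)
      = hgt msize (fun j => (p j : ℕ)) (x : ℕ) - 1 :=
    hgt_succ_of_ne msize (fun j hj => hnm j (Fin.val_injective hj))
  have hqx := qm_mem h1 (pos_of_one_le_hgt h1)
  rcases eq_or_lt_of_le (show (x : ℕ) + 1 ≤ (x' : ℕ) by omega) with h | h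
  · rw [h] at hstep; omega
  · have := qm_mid h1' (pos_of_one_le_hgt h1') (j := (x : ℕ) + 1) (by omega) h
    omega

include hpos hsum hinj hfeas in
lemma card_Vmk (i : Fin k) : (Vmk msize p i).card = msize i := by
  classical
  set S : Finset (Fin m) := Finset.univ.filter (fun x => (∀ j, p j ≠ x) ∧
    qm msize (fun j => (p j : ℕ)) (x : ℕ) = (p i : ℕ)) with hS
  have hVS : Vmk msize p i = insert (p i) S := by
    ext x
    rw [mem_Vmk, Finset.mem_insert, hS]
    simp only [Finset.mem_filter, Finset.mem_univ, true_and]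
  have hpiS : p i ∉ S := by
    rw [hS]
    simp only [Finset.mem_filter, Finset.mem_univ, true_and, not_and]
    intro h
    exact absurd rfl (h i)
  have hcard : S.card = (Finset.Icc (hgt msize (fun j => (p j : ℕ)) (p i) + 1)
      (hgt msize (fun j => (p j : ℕ)) ((p i : ℕ) + 1))).card := by
    refine Finset.card_bij (fun x _ => hgt msize (fun j => (p j : ℕ)) (x : ℕ)) ?_ ?_ ?_
    · intro x hx
      rw [hS] at hx
      simp only [Finset.mem_filter, Finset.mem_univ, true_and] at hx
      obtain ⟨hnm, hqx⟩ := hx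
      have h1 := nonmin_hgt hfeas hnm
      have hmem := qm_mem h1 (pos_of_one_le_hgt h1)
      rw [hqx] at hmem
      simp only [Finset.mem_Icc]
      constructor
      · omega
      · rcases eq_or_lt_of_le (show (p i : ℕ) + 1 ≤ (x : ℕ) by omega) with h | h
        · rw [h]
        · exact qm_mid h1 (pos_of_one_le_hgt h1) (j := (p i : ℕ) + 1) (by omega) h
    · intro x hx x' hx' hL
      rw [hS] at hx hx'
      simp only [Finset.mem_filter, Finset.mem_univ, true_and] at hx hx'
      by_contra hne
      have hvne : (x : ℕ) ≠ (x' : ℕ) := fun h => hne (Fin.val_injective h)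
      rcases Nat.lt_or_ge (x : ℕ) (x' : ℕ) with h | h
      · exact close_unique hfeas hx.1 hx'.1 (hx.2.trans hx'.2.symm) hL h
      · exact close_unique hfeas hx'.1 hx.1 (hx'.2.trans hx.2.symm) hL.symm (by omega)
    · intro L hL
      rw [Finset.mem_Icc] at hL
      obtain ⟨x, hx1, hx2, hx3⟩ := exists_close hpos hsum hinj hfeas i (by omega) hL.2
      refine ⟨x, ?_, hx3⟩
      rw [hS]
      simp only [Finset.mem_filter, Finset.mem_univ, true_and]
      exact ⟨hx1, hx2⟩
  have hstep : hgt msize (fun j => (p j : ℕ)) ((p i : ℕ) + 1)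
      = hgt msize (fun j => (p j : ℕ)) (p i) + msize i - 1 :=
    hgt_succ_of_eq msize (hinjq hinj) rfl
  rw [hVS, Finset.card_insert_of_notMem hpiS, hcard, Int.card_Icc, hstep]
  have := hpos i
  omega

include hinj hfeas in
lemma Vmk_noncrossing : IsNonCrossingFamily (Vmk msize p) := by
  rintro ⟨a, b, i₁, i₂, i₃, i₄, hab, h12, h23, h34, hi₁, hi₃, hi₂, hi₄⟩
  have h12v : (i₁ : ℕ) < (i₂ : ℕ) := h12
  have h23v : (i₂ : ℕ) < (i₃ : ℕ) := h23
  have h34v : (i₃ : ℕ) < (i₄ : ℕ) := h34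
  have hpa1 : (p a : ℕ) ≤ (i₁ : ℕ) := Vmk_le hfeas hi₁
  have hpb2 : (p b : ℕ) ≤ (i₂ : ℕ) := Vmk_le hfeas hi₂
  have hi₃' : (∀ j, p j ≠ i₃) ∧ qm msize (fun j => (p j : ℕ)) (i₃ : ℕ) = (p a : ℕ) := by
    rcases (mem_Vmk.1 hi₃) with h | h
    · exfalso; have := congrArg Fin.val h; omega
    · exact h
  have hi₄' : (∀ j, p j ≠ i₄) ∧ qm msize (fun j => (p j : ℕ)) (i₄ : ℕ) = (p b : ℕ) := by
    rcases (mem_Vmk.1 hi₄) with h | h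
    · exfalso; have := congrArg Fin.val h; omega
    · exact h
  have h3 := nonmin_hgt hfeas hi₃'.1
  have h4 := nonmin_hgt hfeas hi₄'.1
  have hpapb : (p a : ℕ) ≠ (p b : ℕ) := fun h => hab (hinj (Fin.val_injective h))
  rcases Nat.lt_or_ge (p b : ℕ) (p a : ℕ) with hcase | hcase
  · have hi₂' : (∀ j, p j ≠ i₂) ∧ qm msize (fun j => (p j : ℕ)) (i₂ : ℕ) = (p b : ℕ) := by
      rcases (mem_Vmk.1 hi₂) with h | h
      · exfalso; have := congrArg Fin.val h; omega
      · exact h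
    have h2 := nonmin_hgt hfeas hi₂'.1
    have hA : hgt msize (fun j => (p j : ℕ)) (i₂ : ℕ) ≤ hgt msize (fun j => (p j : ℕ)) (p a : ℕ) := by
      by_contra hc
      push_neg at hc
      have := qm_max (x := (i₂ : ℕ)) (j := (p a : ℕ)) (by omega) hc
      rw [hi₂'.2] at this
      omega
    have hB : hgt msize (fun j => (p j : ℕ)) (p a : ℕ) < hgt msize (fun j => (p j : ℕ)) (i₃ : ℕ) := by
      have := (qm_mem h3 (pos_of_one_le_hgt h3)).2
      rw [hi₃'.2] at this
      exact this
    have hC : hgt msize (fun j => (p j : ℕ)) (i₃ : ℕ) ≤ hgt msize (fun j => (p j : ℕ)) (i₂ : ℕ) := by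
      apply qm_mid h3 (pos_of_one_le_hgt h3)
      · rw [hi₃'.2]; omega
      · omega
    omega
  · have hcase' : (p a : ℕ) < (p b : ℕ) := by omega
    have hA : hgt msize (fun j => (p j : ℕ)) (i₃ : ℕ) ≤ hgt msize (fun j => (p j : ℕ)) (p b : ℕ) := by
      by_contra hc
      push_neg at hc
      have := qm_max (x := (i₃ : ℕ)) (j := (p b : ℕ)) (by omega) hc
      rw [hi₃'.2] at this
      omega
    have hB : hgt msize (fun j => (p j : ℕ)) (p b : ℕ) < hgt msize (fun j => (p j : ℕ)) (i₄ : ℕ) := by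
      have := (qm_mem h4 (pos_of_one_le_hgt h4)).2
      rw [hi₄'.2] at this
      exact this
    have hC : hgt msize (fun j => (p j : ℕ)) (i₄ : ℕ) ≤ hgt msize (fun j => (p j : ℕ)) (i₃ : ℕ) := by
      apply qm_mid h4 (pos_of_one_le_hgt h4)
      · rw [hi₄'.2]; omega
      · omega
    omega

end VmkLemmas

lemma card_filter_val_lt {j : ℕ} (hj : j ≤ m) :
    (Finset.univ.filter (fun y : Fin m => (y : ℕ) < j)).card = j := by
  have he : (Finset.univ.filter (fun y : Fin m => (y : ℕ) < j))
      = Finset.attachFin (Finset.range j)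
        (fun a ha => lt_of_lt_of_le (Finset.mem_range.1 ha) hj) := by
    ext y
    simp [Finset.mem_attachFin]
  rw [he, Finset.card_attachFin, Finset.card_range]

section PartLemmas

variable {msize : Fin k → ℕ} {V : Fin k → Finset (Fin m)}
  (hne : ∀ i, (V i).Nonempty)
  (hdisj : ∀ i j, i ≠ j → Disjoint (V i) (V j))
  (hcov : ∀ x : Fin m, ∃ i, x ∈ V i)
  (hsizes : ∀ i, (V i).card = msize i)
  (hnc : IsNonCrossingFamily V)

/-- the set `F j` of elements `≥ j` whose block minimum is `< j`. -/
def Fst (V : Fin k → Finset (Fin m)) (hne : ∀ i, (V i).Nonempty) (j : ℕ) : Finset (Fin m) :=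
  Finset.univ.filter (fun y : Fin m => j ≤ (y : ℕ) ∧
    ∃ b, y ∈ V b ∧ (((V b).min' (hne b) : ℕ) < j))

include hdisj hcov hsizes in
lemma hgt_eq_cardF {j : ℕ} (hj : j ≤ m) :
    hgt msize (fun i => (((V i).min' (hne i) : ℕ))) j = ((Fst V hne j).card : ℤ) := by
  classical
  set I : Finset (Fin k) := Finset.univ.filter
    (fun i => (((V i).min' (hne i) : ℕ)) < j) with hI
  have hsum' : ∑ i ∈ I, (msize i : ℤ) = ((∑ i ∈ I, (V i).card : ℕ) : ℤ) := by
    push_cast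
    exact Finset.sum_congr rfl (fun i _ => by rw [hsizes i])
  have hbu : ∑ i ∈ I, (V i).card = (I.biUnion V).card :=
    (Finset.card_biUnion (fun i _ j' _ hij => hdisj i j' hij)).symm
  have hsplit : (I.biUnion V).card =
      ((I.biUnion V).filter (fun y : Fin m => (y : ℕ) < j)).card +
      ((I.biUnion V).filter (fun y : Fin m => ¬ ((y : ℕ) < j))).card :=
    (Finset.card_filter_add_card_filter_not _).symm
  have hc1 : ((I.biUnion V).filter (fun y : Fin m => (y : ℕ) < j))
      = Finset.univ.filter (fun y : Fin m => (y : ℕ) < j) := by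
    ext y
    simp only [Finset.mem_filter, Finset.mem_biUnion, Finset.mem_univ, true_and, hI]
    constructor
    · rintro ⟨_, hy⟩; exact hy
    · intro hy
      obtain ⟨b, hb⟩ := hcov y
      have hmin : (((V b).min' (hne b)) : ℕ) ≤ (y : ℕ) := Finset.min'_le _ _ hb
      exact ⟨⟨b, by omega, hb⟩, hy⟩
  have hc2 : ((I.biUnion V).filter (fun y : Fin m => ¬ ((y : ℕ) < j))) = Fst V hne j := by
    ext y
    simp only [Finset.mem_filter, Finset.mem_biUnion, Finset.mem_univ, true_and, hI, Fst,
      not_lt]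
    tauto
  rw [hgt]
  have hIeq : Finset.univ.filter (fun i => (fun i => (((V i).min' (hne i) : ℕ))) i < j) = I := rfl
  rw [hIeq, hsum', hbu, hsplit, hc1, hc2, card_filter_val_lt hj]
  push_cast
  ring

include hdisj in
lemma minV_inj : Function.Injective (fun i => (V i).min' (hne i)) := by
  intro a b hab
  by_contra hne'
  have h1 : (V a).min' (hne a) ∈ V a := Finset.min'_mem _ _
  have h2 : (V b).min' (hne b) ∈ V b := Finset.min'_mem _ _
  simp only at hab
  rw [hab] at h1
  exact (Finset.disjoint_left.1 (hdisj a b hne')) h1 h2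

include hdisj hcov hsizes in
lemma Feas_minV : Feas msize m (fun i => (((V i).min' (hne i) : ℕ))) := by
  intro x hx hxnm
  rw [hgt_eq_cardF hne hdisj hcov hsizes (le_of_lt hx)]
  have hmem : (⟨x, hx⟩ : Fin m) ∈ Fst V hne x := by
    obtain ⟨b, hb⟩ := hcov ⟨x, hx⟩
    simp only [Fst, Finset.mem_filter, Finset.mem_univ, true_and]
    refine ⟨le_refl _, b, hb, ?_⟩
    have h1 : (((V b).min' (hne b)) : ℕ) ≤ x := Finset.min'_le _ _ hb
    have h2 : (((V b).min' (hne b)) : ℕ) ≠ x := hxnm b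
    omega
  have := Finset.card_pos.2 ⟨_, hmem⟩
  omega

include hne hdisj hcov hsizes hnc in
lemma qm_of_partition {x : Fin m} {i : Fin k} (hx : x ∈ V i)
    (hxnm : ∀ j, (V j).min' (hne j) ≠ x) :
    qm msize (fun i => (((V i).min' (hne i) : ℕ))) (x : ℕ) = (((V i).min' (hne i)) : ℕ) := by
  classical
  set q₀ : Fin m := (V i).min' (hne i) with hq₀
  have hq0x : (q₀ : ℕ) < (x : ℕ) := by
    have h1 : (q₀ : ℕ) ≤ (x : ℕ) := Finset.min'_le _ _ hx
    have h2 : q₀ ≠ x := hxnm i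
    have : (q₀ : ℕ) ≠ (x : ℕ) := fun h => h2 (Fin.val_injective h)
    omega
  -- (a) card (F q₀) + 1 ≤ card (F x)
  have hxFx : x ∈ Fst V hne (x : ℕ) := by
    simp only [Fst, Finset.mem_filter, Finset.mem_univ, true_and]
    exact ⟨le_refl _, i, hx, hq0x⟩
  have hxnotFq : x ∉ Fst V hne (q₀ : ℕ) := by
    simp only [Fst, Finset.mem_filter, Finset.mem_univ, true_and, not_and]
    rintro - ⟨b, hb1, hb2⟩
    have hbi : b = i := by
      by_contra hbi
      exact (Finset.disjoint_left.1 (hdisj b i hbi)) hb1 hx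
    rw [hbi] at hb2
    omega
  have hsub1 : Fst V hne (q₀ : ℕ) ⊆ Fst V hne (x : ℕ) := by
    intro y hy
    simp only [Fst, Finset.mem_filter, Finset.mem_univ, true_and] at hy ⊢
    obtain ⟨hy1, b, hb1, hb2⟩ := hy
    have hyx : (x : ℕ) ≤ (y : ℕ) := by
      by_contra hc
      push_neg at hc
      -- y < x; noncrossing violation with (min b, q₀, y, x), blocks (b, i)
      have hbi : b ≠ i := by
        rintro rfl
        omega
      have hyq : (q₀ : ℕ) < (y : ℕ) := by
        rcases Nat.lt_or_ge (q₀ : ℕ) (y : ℕ) with h | h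
        · exact h
        · exfalso
          have : (q₀ : ℕ) = (y : ℕ) := by omega
          have hqy : q₀ = y := Fin.val_injective this
          rw [← hqy] at hb1
          exact (Finset.disjoint_left.1 (hdisj b i hbi)) hb1 (Finset.min'_mem _ _)
      exact hnc ⟨b, i, (V b).min' (hne b), q₀, y, x,
        hbi, hb2, hyq, hc, Finset.min'_mem _ _, hb1, Finset.min'_mem _ _, hx⟩
    exact ⟨by omega, b, hb1, by omega⟩
  have hcard1 : (Fst V hne (q₀ : ℕ)).card + 1 ≤ (Fst V hne (x : ℕ)).card := by
    have hsub : insert x (Fst V hne (q₀ : ℕ)) ⊆ Fst V hne (x : ℕ) := by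
      intro y hy
      rcases Finset.mem_insert.1 hy with rfl | hy'
      · exact hxFx
      · exact hsub1 hy'
    have := Finset.card_le_card hsub
    rw [Finset.card_insert_of_notMem hxnotFq] at this
    omega
  -- (b) for q₀ < j < x, F x ⊆ F j
  have hsub2 : ∀ j, (q₀ : ℕ) < j → j < (x : ℕ) → Fst V hne (x : ℕ) ⊆ Fst V hne j := by
    intro j hj1 hj2 y hy
    simp only [Fst, Finset.mem_filter, Finset.mem_univ, true_and] at hy ⊢
    obtain ⟨hy1, b, hb1, hb2⟩ := hy
    refine ⟨by omega, b, hb1, ?_⟩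
    by_contra hc
    push_neg at hc
    -- j ≤ min b; noncrossing with (q₀, min b, x, y), blocks (i, b)
    have hbi : i ≠ b := by
      rintro rfl
      omega
    have hyx : (x : ℕ) < (y : ℕ) := by
      rcases Nat.lt_or_ge (x : ℕ) (y : ℕ) with h | h
      · exact h
      · exfalso
        have : (x : ℕ) = (y : ℕ) := by omega
        have hqy : x = y := Fin.val_injective this
        rw [← hqy] at hb1
        exact (Finset.disjoint_left.1 (hdisj i b hbi)) hx hb1
    exact hnc ⟨i, b, q₀, (V b).min' (hne b), x, y,
      hbi, by omega, by omega, hyx, Finset.min'_mem _ _, hx, Finset.min'_mem _ _, hb1⟩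
  -- conclude via qm_eq
  have hLq : hgt msize (fun i => (((V i).min' (hne i) : ℕ))) (q₀ : ℕ)
      = ((Fst V hne (q₀ : ℕ)).card : ℤ) :=
    hgt_eq_cardF hne hdisj hcov hsizes (le_of_lt q₀.isLt)
  have hLx : hgt msize (fun i => (((V i).min' (hne i) : ℕ))) (x : ℕ)
      = ((Fst V hne (x : ℕ)).card : ℤ) :=
    hgt_eq_cardF hne hdisj hcov hsizes (le_of_lt x.isLt)
  have hx1 : 1 ≤ hgt msize (fun i => (((V i).min' (hne i) : ℕ))) (x : ℕ) := by
    rw [hLx]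
    have := Finset.card_pos.2 ⟨_, hxFx⟩
    omega
  apply qm_eq hx1 (by omega : 0 < (x : ℕ)) hq0x
  · rw [hLq, hLx]; omega
  · intro j hj1 hj2
    have hLj : hgt msize (fun i => (((V i).min' (hne i) : ℕ))) j
        = ((Fst V hne j).card : ℤ) :=
      hgt_eq_cardF hne hdisj hcov hsizes (by omega : j ≤ m)
    rw [hLj, hLx]
    have := Finset.card_le_card (hsub2 j hj1 hj2)
    omega

end PartLemmas

section Cycle

variable (msize : Fin k → ℕ) (r : Fin k → Fin (m + 1))

/-- cyclic step weights -/
def wfn (x : ℕ) : ℤ :=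
  (∑ i ∈ Finset.univ.filter (fun i => (r i : ℕ) = x % (m + 1)), (msize i : ℤ)) - 1

/-- cyclic height function -/
def G (t : ℕ) : ℤ := ∑ x ∈ Finset.range t, wfn msize r x

lemma wfn_period (x : ℕ) : wfn msize r (x + (m + 1)) = wfn msize r x := by
  simp [wfn, Nat.add_mod_right]

lemma G_zero : G msize r 0 = 0 := by simp [G]

variable {msize} in
lemma G_top (hsum : ∑ i, msize i = m) : G msize r (m + 1) = -1 := by
  have h1 : ∀ x ∈ Finset.range (m + 1), wfn msize r x
      = (∑ i ∈ Finset.univ.filter (fun i => (r i : ℕ) = x), (msize i : ℤ)) - 1 := by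
    intro x hx
    rw [wfn, Nat.mod_eq_of_lt (Finset.mem_range.1 hx)]
  rw [G, Finset.sum_congr rfl h1, Finset.sum_sub_distrib]
  have h2 : ∑ x ∈ Finset.range (m + 1),
      (∑ i ∈ Finset.univ.filter (fun i => (r i : ℕ) = x), (msize i : ℤ))
      = ∑ i, (msize i : ℤ) := by
    have h3 : ∀ x ∈ Finset.range (m + 1),
        (∑ i ∈ Finset.univ.filter (fun i => (r i : ℕ) = x), (msize i : ℤ))
        = ∑ i, if (r i : ℕ) = x then (msize i : ℤ) else 0 := by
      intro x _
      rw [Finset.sum_filter]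
    rw [Finset.sum_congr rfl h3, Finset.sum_comm]
    apply Finset.sum_congr rfl
    intro i _
    have : ∀ x ∈ Finset.range (m + 1), (if (r i : ℕ) = x then (msize i : ℤ) else 0)
        = if x = (r i : ℕ) then (msize i : ℤ) else 0 := by
      intro x _
      by_cases h : (r i : ℕ) = x <;> simp [h, Ne.symm, eq_comm]
    rw [Finset.sum_congr rfl this, Finset.sum_ite_eq' (Finset.range (m + 1)) ((r i : ℕ))]
    simp [(r i).isLt]
  rw [h2]
  have hsumz : (∑ i, (msize i : ℤ)) = m := by exact_mod_cast hsum
  rw [hsumz]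
  simp only [Finset.sum_const, Finset.card_range, nsmul_eq_mul, mul_one]
  push_cast
  ring

variable {msize} in
lemma G_period (hsum : ∑ i, msize i = m) (t : ℕ) :
    G msize r (t + (m + 1)) = G msize r t - 1 := by
  induction t with
  | zero => simpa [G_zero] using G_top r hsum
  | succ t ih =>
    have h1 : t + 1 + (m + 1) = (t + (m + 1)) + 1 := by omega
    have e1 : G msize r ((t + (m + 1)) + 1) = G msize r (t + (m + 1)) + wfn msize r (t + (m + 1)) :=
      Finset.sum_range_succ _ _
    have e2 : G msize r (t + 1) = G msize r t + wfn msize r t := Finset.sum_range_succ _ _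
    rw [h1, e1, ih, wfn_period, e2]
    ring

lemma G_add (c t : ℕ) :
    G msize r (c + t) = G msize r c + ∑ x ∈ Finset.range t, wfn msize r (c + x) := by
  induction t with
  | zero => simp
  | succ t ih =>
    have h1 : c + (t + 1) = (c + t) + 1 := by omega
    rw [h1, G, Finset.sum_range_succ, ← G, ih, Finset.sum_range_succ]
    ring

variable {msize} in
lemma hgt_shift (c : Fin (m + 1)) {t : ℕ} (ht : t ≤ m + 1) :
    hgt msize (fun i => ((r i - c : Fin (m + 1)) : ℕ)) t
      = G msize r ((c : ℕ) + t) - G msize r (c : ℕ) := by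
  rw [G_add]
  have key : ∀ x ∈ Finset.range t, wfn msize r ((c : ℕ) + x)
      = (∑ i ∈ Finset.univ, if x = ((r i - c : Fin (m + 1)) : ℕ) then (msize i : ℤ) else 0)
        - 1 := by
    intro x hx
    have hxm : x < m + 1 := lt_of_lt_of_le (Finset.mem_range.1 hx) ht
    rw [wfn, Finset.sum_filter]
    congr 1
    apply Finset.sum_congr rfl
    intro i _
    congr 1
    set ξ : Fin (m + 1) := ⟨x, hxm⟩ with hξ
    have hval : ((c : ℕ) + x) % (m + 1) = ((c + ξ : Fin (m + 1)) : ℕ) := by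
      rw [Fin.val_add]
    rw [hval]
    have lem : ((r i : ℕ) = ((c + ξ : Fin (m + 1)) : ℕ)) ↔ (x = ((r i - c : Fin (m + 1)) : ℕ)) := by
      constructor
      · intro h
        have h2 : r i = c + ξ := Fin.val_injective h
        have : r i - c = ξ := by rw [h2]; exact add_sub_cancel_left c ξ
        rw [this]
      · intro h
        have h2 : ξ = r i - c := Fin.val_injective h
        have : c + ξ = r i := by rw [h2]; exact add_sub_cancel _ _
        rw [this]
    simp only [eq_iff_iff]
    exact lem
  rw [Finset.sum_congr rfl key, Finset.sum_sub_distrib]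
  have hswap : ∑ x ∈ Finset.range t,
      (∑ i ∈ Finset.univ, if x = ((r i - c : Fin (m + 1)) : ℕ) then (msize i : ℤ) else 0)
      = ∑ i ∈ Finset.univ, if ((r i - c : Fin (m + 1)) : ℕ) < t then (msize i : ℤ) else 0 := by
    rw [Finset.sum_comm]
    apply Finset.sum_congr rfl
    intro i _
    rw [Finset.sum_ite_eq' (Finset.range t) (((r i - c : Fin (m + 1)) : ℕ))]
    simp
  rw [hswap, hgt, Finset.sum_filter]
  simp only [Finset.sum_const, Finset.card_range, nsmul_eq_mul, mul_one]
  ring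

variable {msize r} 

/-- a rotation is good if the height stays nonnegative for the first `m` steps -/
def Good (msize : Fin k → ℕ) (r : Fin k → Fin (m + 1)) (c : ℕ) : Prop :=
  ∀ t, t ≤ m → G msize r c ≤ G msize r (c + t)

lemma good_lt_false (hsum : ∑ i, msize i = m) {c c' : ℕ} (hcc : c < c') (hc' : c' < m + 1)
    (hg : Good msize r c) (hg' : Good msize r c') : False := by
  have h1 : G msize r c ≤ G msize r c' := by
    have := hg (c' - c) (by omega)
    rwa [(by omega : c + (c' - c) = c')] at this
  have h2 : G msize r c' ≤ G msize r (c + (m + 1)) := by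
    have := hg' (c + (m + 1) - c') (by omega)
    rwa [(by omega : c' + (c + (m + 1) - c') = c + (m + 1))] at this
  rw [G_period r hsum] at h2
  omega

lemma good_exists_unique (hsum : ∑ i, msize i = m) :
    ∃! c : ℕ, c < m + 1 ∧ Good msize r c := by
  classical
  obtain ⟨c₀, hc₀mem, hc₀min⟩ := Finset.exists_min_image (Finset.range (m + 1))
    (G msize r) ⟨0, Finset.mem_range.2 (by omega)⟩
  have hEx : ∃ c, c < m + 1 ∧ ∀ t, t < m + 1 → G msize r c ≤ G msize r t :=
    ⟨c₀, Finset.mem_range.1 hc₀mem, fun t ht => hc₀min t (Finset.mem_range.2 ht)⟩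
  obtain ⟨c, ⟨hc1, hc2⟩, hmin⟩ : ∃ c, (c < m + 1 ∧ ∀ t, t < m + 1 → G msize r c ≤ G msize r t) ∧
      ∀ s, s < c → ¬(s < m + 1 ∧ ∀ t, t < m + 1 → G msize r s ≤ G msize r t) :=
    ⟨Nat.find hEx, Nat.find_spec hEx, fun s hs => Nat.find_min hEx hs⟩
  have hgood : Good msize r c := by
    intro t ht
    rcases Nat.lt_or_ge (c + t) (m + 1) with h | h
    · exact hc2 (c + t) h
    · have hs : c + t = (c + t - (m + 1)) + (m + 1) := by omega
      rw [hs, G_period r hsum]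
      set s := c + t - (m + 1) with hsdef
      have hsc : s < c := by omega
      have := hmin s hsc
      push_neg at this
      obtain ⟨t', ht', hlt⟩ := this (by omega)
      have := hc2 t' ht'
      omega
  refine ⟨c, ⟨hc1, hgood⟩, ?_⟩
  rintro c' ⟨hc'1, hg'⟩
  by_contra hne
  rcases Nat.lt_or_ge c' c with h | h
  · exact good_lt_false hsum h hc1 hg' hgood
  · exact good_lt_false hsum (by omega) hc'1 hgood hg'

lemma good_iff (hsum : ∑ i, msize i = m) (hpos : ∀ i, 0 < msize i)
    (hrinj : Function.Injective r) (c : Fin (m + 1)) :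
    Good msize r (c : ℕ) ↔
      ((∀ i, ((r i - c : Fin (m + 1)) : ℕ) < m) ∧
       Feas msize m (fun i => ((r i - c : Fin (m + 1)) : ℕ))) := by
  constructor
  · intro hg
    have havoid : ∀ i, ((r i - c : Fin (m + 1)) : ℕ) < m := by
      intro i
      by_contra hc
      push_neg at hc
      have hieq : ((r i - c : Fin (m + 1)) : ℕ) = m := by
        have := (r i - c).isLt
        omega
      have h0 : 0 ≤ hgt msize (fun j => ((r j - c : Fin (m + 1)) : ℕ)) m := by
        rw [hgt_shift r c (by omega : m ≤ m + 1)]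
        have := hg m (le_refl _)
        omega
      have hsub : Finset.univ.filter (fun j => ((r j - c : Fin (m + 1)) : ℕ) < m)
          ⊆ Finset.univ.erase i := by
        intro j hj
        simp only [Finset.mem_filter, Finset.mem_univ, true_and] at hj
        rw [Finset.mem_erase]
        refine ⟨?_, Finset.mem_univ _⟩
        rintro rfl
        omega
      have hle : (∑ j ∈ Finset.univ.filter (fun j => ((r j - c : Fin (m + 1)) : ℕ) < m),
          (msize j : ℤ)) ≤ ∑ j ∈ Finset.univ.erase i, (msize j : ℤ) :=
        Finset.sum_le_sum_of_subset_of_nonneg hsub (fun j _ _ => by positivity)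
      have herase : ∑ j ∈ Finset.univ.erase i, (msize j : ℤ)
          = (∑ j, (msize j : ℤ)) - msize i := by
        rw [Finset.sum_erase_eq_sub (Finset.mem_univ i)]
      have hsumz : (∑ j, (msize j : ℤ)) = m := by
        rw [← Nat.cast_sum]
        exact_mod_cast congrArg (Nat.cast : ℕ → ℤ) hsum
      rw [hgt] at h0
      have := hpos i
      omega
    refine ⟨havoid, ?_⟩
    intro x hx hxnm
    have h0 : 0 ≤ hgt msize (fun j => ((r j - c : Fin (m + 1)) : ℕ)) (x + 1) := by
      rw [hgt_shift r c (by omega : x + 1 ≤ m + 1)]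
      have := hg (x + 1) (by omega)
      omega
    rw [hgt_succ_of_ne msize hxnm] at h0
    omega
  · rintro ⟨havoid, hfeas⟩
    have hinjq : Function.Injective (fun j => ((r j - c : Fin (m + 1)) : ℕ)) := by
      intro a b hab
      simp only at hab
      have := Fin.val_injective hab
      have h2 : r a - c + c = r b - c + c := by rw [this]
      rw [sub_add_cancel, sub_add_cancel] at h2
      exact hrinj h2
    have := hgt_nonneg msize hinjq hpos hfeas
    intro t ht
    have h0 := this t ht
    rw [hgt_shift r c (by omega : t ≤ m + 1)] at h0
    omega

end Cycle

section RoundTrip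

variable {msize : Fin k → ℕ} {V : Fin k → Finset (Fin m)}
  (hne : ∀ i, (V i).Nonempty)
  (hdisj : ∀ i j, i ≠ j → Disjoint (V i) (V j))
  (hcov : ∀ x : Fin m, ∃ i, x ∈ V i)
  (hsizes : ∀ i, (V i).card = msize i)
  (hnc : IsNonCrossingFamily V)

include hne hdisj hcov hsizes hnc in
lemma Vmk_of_partition (i : Fin k) :
    Vmk msize (fun i => (V i).min' (hne i)) i = V i := by
  classical
  have hinj : Function.Injective (fun i => (V i).min' (hne i)) := minV_inj hne hdisj
  ext x
  simp only [mem_Vmk]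
  constructor
  · rintro (h | ⟨hnm, hq⟩)
    · rw [h]; exact Finset.min'_mem _ _
    · obtain ⟨b, hb⟩ := hcov x
      have hnm' : ∀ j, (V j).min' (hne j) ≠ x := hnm
      have hqb := qm_of_partition hne hdisj hcov hsizes (msize := msize) hnc hb hnm'
      have heq : (((V i).min' (hne i)) : ℕ) = (((V b).min' (hne b)) : ℕ) := by
        rw [← hq, hqb]
      have hib : i = b := hinj (Fin.val_injective heq)
      rw [hib]; exact hb
  · intro hx
    by_cases hmin : ∃ j, (V j).min' (hne j) = x
    · obtain ⟨j, hj⟩ := hmin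
      have hji : j = i := by
        by_contra hji
        exact (Finset.disjoint_left.1 (hdisj j i hji)) (hj ▸ Finset.min'_mem _ _) hx
      exact Or.inl (by rw [← hji, hj])
    · push_neg at hmin
      exact Or.inr ⟨hmin, qm_of_partition hne hdisj hcov hsizes (msize := msize) hnc hx hmin⟩

end RoundTrip

section Count

variable {msize : Fin k → ℕ}

theorem cardA_eq_cardB (hpos : ∀ i, 0 < msize i) (hsum : ∑ i, msize i = m) :
    Nat.card {V : Fin k → Finset (Fin m) //
        (∀ i, (V i).Nonempty) ∧
        (∀ i j, i ≠ j → Disjoint (V i) (V j)) ∧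
        (∀ x : Fin m, ∃ i, x ∈ V i) ∧
        (∀ i, (V i).card = msize i) ∧
        IsNonCrossingFamily V}
      = Nat.card {p : Fin k → Fin m //
          Function.Injective p ∧ Feas msize m (fun i => (p i : ℕ))} := by
  classical
  apply Nat.card_congr
  refine
  { toFun := fun W =>
      ⟨fun i => (W.1 i).min' (W.2.1 i),
        minV_inj W.2.1 W.2.2.1,
        Feas_minV W.2.1 W.2.2.1 W.2.2.2.1 W.2.2.2.2.1⟩
    invFun := fun P =>
      ⟨Vmk msize P.1,
        fun i => ⟨P.1 i, self_mem_Vmk i⟩,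
        fun i j hij => Vmk_disjoint P.2.1 hij,
        Vmk_cover P.2.2,
        card_Vmk hpos hsum P.2.1 P.2.2,
        Vmk_noncrossing P.2.1 P.2.2⟩
    left_inv := ?_
    right_inv := ?_ }
  · rintro ⟨V, hne, hdisj, hcov, hsizes, hnc⟩
    apply Subtype.ext
    funext i
    exact Vmk_of_partition hne hdisj hcov hsizes hnc i
  · rintro ⟨p, hinj, hfeas⟩
    apply Subtype.ext
    funext i
    exact min'_Vmk hfeas i

theorem cardB_cycle (hpos : ∀ i, 0 < msize i) (hsum : ∑ i, msize i = m) :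
    (m + 1) * Nat.card {p : Fin k → Fin m //
          Function.Injective p ∧ Feas msize m (fun i => (p i : ℕ))}
      = Nat.card {r : Fin k → Fin (m + 1) // Function.Injective r} := by
  classical
  have hΦ : ∀ (c : Fin (m + 1)) (p : Fin k → Fin m), Function.Injective p →
      Function.Injective (fun i => c + Fin.castSucc (p i)) := by
    intro c p hp a b hab
    simp only at hab
    have h1 := add_left_cancel hab
    exact hp (Fin.castSucc_injective m h1)
  set Φ : Fin (m + 1) × {p : Fin k → Fin m //
      Function.Injective p ∧ Feas msize m (fun i => (p i : ℕ))} →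
      {r : Fin k → Fin (m + 1) // Function.Injective r} :=
    fun cp => ⟨fun i => cp.1 + Fin.castSucc (cp.2.1 i), hΦ cp.1 cp.2.1 cp.2.2.1⟩ with hΦdef
  -- any such r is good at c
  have hgoodΦ : ∀ (c : Fin (m + 1)) (p : Fin k → Fin m)
      (hp : Function.Injective p) (hf : Feas msize m (fun i => (p i : ℕ))),
      Good msize (fun i => c + Fin.castSucc (p i)) (c : ℕ) := by
    intro c p hp hf
    have hrinj := hΦ c p hp
    rw [good_iff hsum hpos hrinj c]
    have hsub : ∀ i, (fun i => c + Fin.castSucc (p i)) i - c = Fin.castSucc (p i) := by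
      intro i
      exact add_sub_cancel_left _ _
    constructor
    · intro i
      rw [hsub i, Fin.coe_castSucc]
      exact (p i).isLt
    · have hfun : (fun i => (((fun i => c + Fin.castSucc (p i)) i - c : Fin (m + 1)) : ℕ))
          = fun i => (p i : ℕ) := by
        funext i
        rw [hsub i, Fin.coe_castSucc]
      rw [hfun]
      exact hf
  have hbij : Function.Bijective Φ := by
    constructor
    · rintro ⟨c, p, hp, hf⟩ ⟨c', p', hp', hf'⟩ heq
      simp only [hΦdef, Subtype.mk_eq_mk] at heq
      have hfeq : ∀ i, c + Fin.castSucc (p i) = c' + Fin.castSucc (p' i) :=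
        fun i => congrFun heq i
      have hg1 : Good msize (fun i => c + Fin.castSucc (p i)) (c : ℕ) := hgoodΦ c p hp hf
      have hg2 : Good msize (fun i => c + Fin.castSucc (p i)) (c' : ℕ) := by
        have : (fun i => c + Fin.castSucc (p i)) = (fun i => c' + Fin.castSucc (p' i)) := heq
        rw [this]
        exact hgoodΦ c' p' hp' hf'
      obtain ⟨c₀, hc₀, huniq⟩ := good_exists_unique
        (r := fun i => c + Fin.castSucc (p i)) hsum
      have e1 : (c : ℕ) = c₀ := huniq _ ⟨c.isLt, hg1⟩
      have e2 : (c' : ℕ) = c₀ := huniq _ ⟨c'.isLt, hg2⟩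
      have hcc : c = c' := Fin.val_injective (e1.trans e2.symm)
      subst hcc
      have hpp : p = p' := by
        funext i
        have := add_left_cancel (hfeq i)
        exact Fin.castSucc_injective m this
      subst hpp
      rfl
    · rintro ⟨r, hrinj⟩
      obtain ⟨c₀, ⟨hc₀m, hgood⟩, _⟩ := good_exists_unique (r := r) hsum
      set cF : Fin (m + 1) := ⟨c₀, hc₀m⟩ with hcF
      have hgood' : Good msize r (cF : ℕ) := hgood
      obtain ⟨havoid, hfeas⟩ := (good_iff hsum hpos hrinj cF).1 hgood'
      set p : Fin k → Fin m := fun i => ⟨((r i - cF : Fin (m + 1)) : ℕ), havoid i⟩ with hp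
      have hpinj : Function.Injective p := by
        intro a b hab
        have hv : (p a : ℕ) = (p b : ℕ) := congrArg Fin.val hab
        have h2 : r a - cF = r b - cF := Fin.val_injective hv
        have h3 : r a - cF + cF = r b - cF + cF := by rw [h2]
        rw [sub_add_cancel, sub_add_cancel] at h3
        exact hrinj h3
      have hpf : Feas msize m (fun i => (p i : ℕ)) := hfeas
      refine ⟨(cF, ⟨p, hpinj, hpf⟩), ?_⟩
      apply Subtype.ext
      funext i
      show cF + Fin.castSucc (p i) = r i
      have h1 : Fin.castSucc (p i) = r i - cF := by
        apply Fin.val_injective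
        rw [Fin.coe_castSucc]
      rw [h1]
      exact add_sub_cancel _ _
  have := Nat.card_congr (Equiv.ofBijective Φ hbij)
  rw [← this, Nat.card_prod, Nat.card_eq_fintype_card (α := Fin (m + 1)), Fintype.card_fin]

theorem cardR : Nat.card {r : Fin k → Fin (m + 1) // Function.Injective r}
    = (m + 1).descFactorial k := by
  rw [Nat.card_congr (Equiv.subtypeInjectiveEquivEmbedding (Fin k) (Fin (m + 1))),
    Nat.card_eq_fintype_card, Fintype.card_embedding_eq, Fintype.card_fin, Fintype.card_fin]

end Count

end NCP

/-- **Counting labelled non-crossing partitions with prescribed block sizes.** For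
`m ≥ k ≥ 1` and positive integers `m_1 + ⋯ + m_k = m`, the number of ordered `k`-tuples
`(V_1,…,V_k)` of pairwise disjoint nonempty subsets of `{1,…,m}` with union `{1,…,m}`,
`|V_i| = m_i`, forming a non-crossing partition, is `m!/(m−k+1)!` — independently of the
cardinalities `m_1,…,m_k`. -/
theorem card_labelled_noncrossing_partitions
    (m k : ℕ) (hk : 1 ≤ k) (hkm : k ≤ m)
    (msize : Fin k → ℕ) (hpos : ∀ i, 0 < msize i) (hsum : ∑ i, msize i = m) :
    Nat.card {V : Fin k → Finset (Fin m) //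
        (∀ i, (V i).Nonempty) ∧
        (∀ i j, i ≠ j → Disjoint (V i) (V j)) ∧
        (∀ x : Fin m, ∃ i, x ∈ V i) ∧
        (∀ i, (V i).card = msize i) ∧
        IsNonCrossingFamily V}
      = Nat.factorial m / Nat.factorial (m - k + 1) := by
  have hm1 : 0 < m + 1 := by omega
  have hk1 : k - 1 ≤ m := by omega
  have hmk : m - (k - 1) = m - k + 1 := by omega
  have hdesc : (m + 1).descFactorial k = (m + 1) * m.descFactorial (k - 1) := by
    obtain ⟨k', rfl⟩ : ∃ k', k = k' + 1 := ⟨k - 1, by omega⟩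
    rw [Nat.succ_descFactorial_succ]
    simp
  have h1 := NCP.cardA_eq_cardB hpos hsum
  have h2 := NCP.cardB_cycle hpos hsum
  have h3 := NCP.cardR (k := k) (m := m)
  have h4 : (m + 1) * Nat.card {p : Fin k → Fin m //
      Function.Injective p ∧ NCP.Feas msize m (fun i => (p i : ℕ))}
      = (m + 1) * m.descFactorial (k - 1) := by
    rw [h2, h3, hdesc]
  have h5 : Nat.card {p : Fin k → Fin m //
      Function.Injective p ∧ NCP.Feas msize m (fun i => (p i : ℕ))}
      = m.descFactorial (k - 1) := Nat.eq_of_mul_eq_mul_left hm1 h4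
  rw [h1, h5, Nat.descFactorial_eq_div hk1, hmk]
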